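/- Let ε ∈ [0,1] and let G be a bipartite graph with bipartition (A,B) and maximum degree Δ. If H is a subgraph of G such that E(H) is a clique in L(G)² and |E(H)| ≥ (1−ε)Δ², then there exist A' ⊆ A and B' ⊆ B with |A'|, |B'| ≤ Δ such that the number of edges of H with one end in A' and the other in B' is at least (1 − 2ε − 2√ε)Δ². -/

import Mathlib

/-- Two edges of `G` at distance at most 2 (adjacency or equality in `L(G)²`). -/
def EdgesClose {V : Type*} (G : SimpleGraph V) (e f : Sym2 V) : Prop :=
  ∃ u v, u ∈ e ∧ v ∈ f ∧ (u = v ∨ G.Adj u v)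

open Finset

set_option maxHeartbeats 1000000 in
private lemma key {V : Type*} [Fintype V] (G : SimpleGraph V) [DecidableRel G.Adj]
    (A B : Set V) (hdisj : Disjoint A B)
    (hbip : ∀ x y, G.Adj x y → (x ∈ A ∧ y ∈ B) ∨ (x ∈ B ∧ y ∈ A))
    (ε : ℝ) (hε0 : 0 ≤ ε)
    (H : G.Subgraph)
    (hclique : ∀ e ∈ H.edgeSet, ∀ f ∈ H.edgeSet, EdgesClose G e f)
    (hsize : (1 - ε) * (G.maxDegree : ℝ) ^ 2 ≤ (H.edgeSet.ncard : ℝ))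
    (a : V) (ha : a ∈ A)
    (hamax : ∀ v, {w | H.Adj v w}.ncard ≤ {w | H.Adj a w}.ncard)
    (hane : {w | H.Adj a w}.Nonempty) :
    ∃ A' ⊆ A, ∃ B' ⊆ B, A'.ncard ≤ G.maxDegree ∧ B'.ncard ≤ G.maxDegree ∧
      (1 - 2 * ε - 2 * Real.sqrt ε) * (G.maxDegree : ℝ) ^ 2 ≤
        (({e | e ∈ H.edgeSet ∧ ∃ x ∈ A', ∃ y ∈ B', e = s(x, y)} : Set (Sym2 V)).ncard : ℝ) := by
  classical
  -- basic side facts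
  have hAB : ∀ {u : V}, u ∈ A → u ∉ B := fun hu hv => Set.disjoint_left.mp hdisj hu hv
  have hGadj : ∀ {u v : V}, H.Adj u v → G.Adj u v := fun h => H.adj_sub h
  have hsideA : ∀ {u v : V}, G.Adj u v → u ∈ A → v ∈ B := by
    intro u v h hu
    rcases hbip u v h with ⟨_, h2⟩ | ⟨h1, _⟩
    · exact h2
    · exact absurd h1 (hAB hu)
  have hsideB : ∀ {u v : V}, G.Adj u v → u ∈ B → v ∈ A := by
    intro u v h hu
    rcases hbip u v h with ⟨h1, _⟩ | ⟨_, h2⟩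
    · exact absurd hu (hAB h1)
    · exact h2
  have hnoAA : ∀ {u v : V}, u ∈ A → v ∈ A → ¬ G.Adj u v := fun hu hv h => hAB hv (hsideA h hu)
  have hnoBB : ∀ {u v : V}, u ∈ B → v ∈ B → ¬ G.Adj u v :=
    fun hu hv h => hAB (hsideB h hu) hv
  -- closeness workhorse
  have hclose : ∀ {x y x' y' : V}, H.Adj x y → H.Adj x' y' → x ∈ A → y ∈ B → x' ∈ A → y' ∈ B →
      x = x' ∨ y = y' ∨ G.Adj x y' ∨ G.Adj x' y := by
    intro x y x' y' h1 h2 hx hy hx' hy'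
    obtain ⟨u, v, hu, hv, huv⟩ := hclique s(x, y) ((SimpleGraph.Subgraph.mem_edgeSet).2 h1)
      s(x', y') ((SimpleGraph.Subgraph.mem_edgeSet).2 h2)
    rw [Sym2.mem_iff] at hu hv
    rcases hu with rfl | rfl <;> rcases hv with rfl | rfl <;> rcases huv with h' | h'
    · exact Or.inl h'
    · exact absurd h' (hnoAA hx hx')
    · exact absurd hy' (hAB (h' ▸ hx))
    · exact Or.inr (Or.inr (Or.inl h'))
    · exact absurd hx' (fun hxx => hAB hxx (h' ▸ hy))
    · exact Or.inr (Or.inr (Or.inr h'.symm))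
    · exact Or.inr (Or.inl h')
    · exact absurd h' (hnoBB hy hy')
  set Δn := G.maxDegree with hΔn
  set dd : V → ℕ := fun v => (univ.filter (fun w => H.Adj v w)).card with hddDef
  have hdd : ∀ v, {w | H.Adj v w}.ncard = dd v := by
    intro v
    have hfin : {w | H.Adj v w}.Finite := Set.toFinite _
    have hts : hfin.toFinset = univ.filter (fun w => H.Adj v w) := by
      ext w; simp [Set.Finite.mem_toFinset]
    rw [Set.ncard_eq_toFinset_card _ hfin, hts]
  have hamax' : ∀ v, dd v ≤ dd a := by
    intro v; rw [← hdd, ← hdd]; exact hamax v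
  obtain ⟨y₀, hy₀⟩ := hane
  have hy₀' : H.Adj a y₀ := hy₀
  have hddle : ∀ v, dd v ≤ Δn := by
    intro v
    have h1 : univ.filter (fun w => H.Adj v w) ⊆ G.neighborFinset v := by
      intro w hw
      simp only [mem_filter] at hw
      simpa [SimpleGraph.mem_neighborFinset] using hGadj hw.2
    calc dd v ≤ (G.neighborFinset v).card := Finset.card_le_card h1
      _ = G.degree v := G.card_neighborFinset_eq_degree v
      _ ≤ Δn := G.degree_le_maxDegree v
  have hdegle : ∀ v, (G.neighborFinset v).card ≤ Δn := by
    intro v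
    rw [G.card_neighborFinset_eq_degree v]; exact G.degree_le_maxDegree v
  have hpΔ : dd a ≤ Δn := hddle a
  -- choose b in N(a) of max H-degree
  have hy₀NG : y₀ ∈ G.neighborFinset a := by
    simpa [SimpleGraph.mem_neighborFinset] using hGadj hy₀'
  obtain ⟨b, hbNG, hbmax⟩ := Finset.exists_max_image (G.neighborFinset a) dd ⟨y₀, hy₀NG⟩
  have habG : G.Adj a b := by simpa [SimpleGraph.mem_neighborFinset] using hbNG
  have hbB : b ∈ B := hsideA habG ha
  have hbr : dd b ≤ Δn := hddle b
  -- the oriented edge finset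
  set D : Finset (V × V) :=
    univ.filter (fun q : V × V => H.Adj q.1 q.2 ∧ q.1 ∈ A ∧ q.2 ∈ B) with hDdef
  have hmemD : ∀ {q : V × V}, q ∈ D ↔ (H.Adj q.1 q.2 ∧ q.1 ∈ A ∧ q.2 ∈ B) := by
    intro q; simp [hDdef]
  set Din := D.filter (fun q => G.Adj a q.2) with hDinDef
  set Dout := D.filter (fun q => ¬ G.Adj a q.2) with hDoutDef
  set Dc := Din.filter (fun q => G.Adj b q.1) with hDcDef
  set Dnc := Din.filter (fun q => ¬ G.Adj b q.1) with hDncDef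
  have hmemDin : ∀ {q : V × V}, q ∈ Din →
      H.Adj q.1 q.2 ∧ q.1 ∈ A ∧ q.2 ∈ B ∧ G.Adj a q.2 := by
    intro q hq
    rw [hDinDef, mem_filter] at hq
    obtain ⟨h1, h2, h3⟩ := hmemD.1 hq.1
    exact ⟨h1, h2, h3, hq.2⟩
  have hmemDout : ∀ {q : V × V}, q ∈ Dout →
      H.Adj q.1 q.2 ∧ q.1 ∈ A ∧ q.2 ∈ B ∧ ¬ G.Adj a q.2 := by
    intro q hq
    rw [hDoutDef, mem_filter] at hq
    obtain ⟨h1, h2, h3⟩ := hmemD.1 hq.1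
    exact ⟨h1, h2, h3, hq.2⟩
  have hmemDnc : ∀ {q : V × V}, q ∈ Dnc →
      H.Adj q.1 q.2 ∧ q.1 ∈ A ∧ q.2 ∈ B ∧ G.Adj a q.2 ∧ ¬ G.Adj b q.1 := by
    intro q hq
    rw [hDncDef, mem_filter] at hq
    obtain ⟨h1, h2, h3, h4⟩ := hmemDin hq.1
    exact ⟨h1, h2, h3, h4, hq.2⟩
  have hsplit1 : Din.card + Dout.card = D.card :=
    Finset.card_filter_add_card_filter_not _
  have hsplit2 : Dc.card + Dnc.card = Din.card :=
    Finset.card_filter_add_card_filter_not _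
  -- edge count identification
  have hmcard : H.edgeSet.ncard = D.card := by
    have hfin : H.edgeSet.Finite := Set.toFinite _
    rw [Set.ncard_eq_toFinset_card _ hfin]
    refine (Finset.card_bij (fun q _ => s(q.1, q.2)) ?_ ?_ ?_).symm
    · intro q hq
      rw [Set.Finite.mem_toFinset]
      exact (SimpleGraph.Subgraph.mem_edgeSet).2 (hmemD.1 hq).1
    · intro q1 hq1 q2 hq2 h
      obtain ⟨_, hA1, hB1⟩ := hmemD.1 hq1
      obtain ⟨_, hA2, hB2⟩ := hmemD.1 hq2
      rw [Sym2.eq_iff] at h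
      rcases h with ⟨h1, h2⟩ | ⟨h1, h2⟩
      · exact Prod.ext h1 h2
      · exact absurd hB2 (hAB (h1 ▸ hA1))
    · intro e he
      rw [Set.Finite.mem_toFinset] at he
      revert he
      induction e using Sym2.ind with
      | _ x y =>
        intro he
        have hxy : H.Adj x y := (SimpleGraph.Subgraph.mem_edgeSet).1 he
        rcases hbip x y (hGadj hxy) with ⟨h1, h2⟩ | ⟨h1, h2⟩
        · exact ⟨(x, y), hmemD.2 ⟨hxy, h1, h2⟩, rfl⟩
        · exact ⟨(y, x), hmemD.2 ⟨hxy.symm, h2, h1⟩, Sym2.eq_swap⟩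
  -- counting edges at a fixed B-endpoint
  have hcnt : ∀ y : V, (D.filter (fun q => q.2 = y)).card ≤ dd y := by
    intro y
    apply Finset.card_le_card_of_injOn (fun q => q.1)
    · intro q hq
      simp only [Finset.mem_coe, mem_filter] at hq
      obtain ⟨hqD, hq2⟩ := hq
      simp only [Finset.mem_coe, mem_filter, mem_univ, true_and]
      exact (hq2 ▸ (hmemD.1 hqD).1).symm
    · intro q1 h1 q2 h2 h
      simp only [Finset.coe_filter, Set.mem_setOf_eq] at h1 h2
      exact Prod.ext h (h1.2.trans h2.2.symm)
  have hDinsub : Din ⊆ (G.neighborFinset a).biUnion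
      (fun y => D.filter (fun q => q.2 = y)) := by
    intro q hq
    have hq' := hmemDin hq
    rw [Finset.mem_biUnion]
    refine ⟨q.2, by simpa [SimpleGraph.mem_neighborFinset] using hq'.2.2.2, ?_⟩
    rw [mem_filter]
    refine ⟨?_, rfl⟩
    rw [hDinDef, mem_filter] at hq
    exact hq.1
  have N1 : Din.card ≤ Δn * dd b := by
    calc Din.card ≤ ((G.neighborFinset a).biUnion (fun y => D.filter (fun q => q.2 = y))).card :=
          Finset.card_le_card hDinsub
      _ ≤ ∑ y ∈ G.neighborFinset a, (D.filter (fun q => q.2 = y)).card :=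
          Finset.card_biUnion_le
      _ ≤ ∑ _y ∈ G.neighborFinset a, dd b :=
          Finset.sum_le_sum (fun y hy => le_trans (hcnt y) (hbmax y hy))
      _ = (G.neighborFinset a).card * dd b := by rw [Finset.sum_const, smul_eq_mul]
      _ ≤ Δn * dd b := Nat.mul_le_mul_right _ (hdegle a)
  -- out-edges structure
  set S' := Dout.image Prod.fst with hS'def
  have houtadj : ∀ q ∈ Dout, ∀ y₁, H.Adj a y₁ → G.Adj q.1 y₁ := by
    intro q hq y₁ hy₁
    obtain ⟨hq1, hqA, hqB, hqna⟩ := hmemDout hq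
    have hy₁B : y₁ ∈ B := hsideA (hGadj hy₁) ha
    rcases hclose hq1 hy₁ hqA hqB ha hy₁B with h | h | h | h
    · exact absurd (hGadj (h ▸ hq1)) hqna
    · exact absurd (by rw [h]; exact hGadj hy₁) hqna
    · exact h
    · exact absurd h hqna
  have hS'NG : ∀ y₁, H.Adj a y₁ → S' ⊆ G.neighborFinset y₁ := by
    intro y₁ hy₁ x hx
    rw [hS'def, Finset.mem_image] at hx
    obtain ⟨q, hq, rfl⟩ := hx
    simpa [SimpleGraph.mem_neighborFinset] using (houtadj q hq y₁ hy₁).symm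
  have hS'card : S'.card ≤ Δn :=
    le_trans (Finset.card_le_card (hS'NG y₀ hy₀')) (hdegle y₀)
  set P := univ.filter (fun w => H.Adj a w) with hPdef
  have hPcard : P.card = dd a := rfl
  have hPmem : ∀ {w : V}, w ∈ P ↔ H.Adj a w := by
    intro w; simp [hPdef]
  -- out-degree bound per vertex of S'
  have houtdeg : ∀ x ∈ S', (Dout.filter (fun q => q.1 = x)).card + dd a ≤ Δn := by
    intro x hx
    rw [hS'def, Finset.mem_image] at hx
    obtain ⟨q₀, hq₀, rfl⟩ := hx
    have hOcard : ((Dout.filter (fun q => q.1 = q₀.1)).image Prod.snd).card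
        = (Dout.filter (fun q => q.1 = q₀.1)).card := by
      apply Finset.card_image_of_injOn
      intro q1 h1 q2 h2 h
      simp only [Finset.coe_filter, Set.mem_setOf_eq] at h1 h2
      exact Prod.ext (h1.2.trans h2.2.symm) h
    have hsub : ((Dout.filter (fun q => q.1 = q₀.1)).image Prod.snd) ∪ P
        ⊆ G.neighborFinset q₀.1 := by
      intro w hw
      rcases Finset.mem_union.1 hw with hw | hw
      · rw [Finset.mem_image] at hw
        obtain ⟨q, hq, rfl⟩ := hw
        rw [mem_filter] at hq
        have h1 := (hmemDout hq.1).1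
        rw [SimpleGraph.mem_neighborFinset]
        rw [hq.2] at h1
        exact hGadj h1
      · rw [SimpleGraph.mem_neighborFinset]
        exact houtadj q₀ hq₀ w (hPmem.1 hw)
    have hdisjOP : Disjoint ((Dout.filter (fun q => q.1 = q₀.1)).image Prod.snd) P := by
      rw [Finset.disjoint_left]
      intro w hwO hwP
      rw [Finset.mem_image] at hwO
      obtain ⟨q, hq, rfl⟩ := hwO
      rw [mem_filter] at hq
      exact (hmemDout hq.1).2.2.2 (hGadj (hPmem.1 hwP))
    calc (Dout.filter (fun q => q.1 = q₀.1)).card + dd a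
        = ((Dout.filter (fun q => q.1 = q₀.1)).image Prod.snd ∪ P).card := by
          rw [Finset.card_union_of_disjoint hdisjOP, hOcard, hPcard]
      _ ≤ (G.neighborFinset q₀.1).card := Finset.card_le_card hsub
      _ ≤ Δn := hdegle q₀.1
  have hDoutsum : Dout.card = ∑ x ∈ S', (Dout.filter (fun q => q.1 = x)).card := by
    rw [hS'def]; exact Finset.card_eq_sum_card_image Prod.fst Dout
  have N2 : Dout.card + S'.card * dd a ≤ S'.card * Δn := by
    have h1 : ∑ x ∈ S', ((Dout.filter (fun q => q.1 = x)).card + dd a)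
        ≤ ∑ _x ∈ S', Δn := Finset.sum_le_sum houtdeg
    rw [Finset.sum_add_distrib, Finset.sum_const, Finset.sum_const, smul_eq_mul,
      smul_eq_mul] at h1
    rw [hDoutsum]
    exact h1
  -- uncaptured in-edges bound
  have hUy : ∀ y : V, (Dnc.filter (fun q => q.2 = y)).card ≤ Δn - dd b := by
    intro y
    rcases Finset.eq_empty_or_nonempty (Dnc.filter (fun q => q.2 = y)) with he | ⟨q, hq⟩
    · simp [he]
    · rw [mem_filter] at hq
      obtain ⟨hqDnc, hq2⟩ := hq
      obtain ⟨hq1, hqA, hqB, hqa2, hqnb⟩ := hmemDnc hqDnc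
      have hyadj : ∀ x₁, H.Adj b x₁ → G.Adj q.2 x₁ := by
        intro x₁ hx₁
        have hx₁A : x₁ ∈ A := hsideB (hGadj hx₁) hbB
        rcases hclose hq1 hx₁.symm hqA hqB hx₁A hbB with h | h | h | h
        · exact absurd (by rw [h]; exact hGadj hx₁) hqnb
        · exfalso
          apply hqnb
          have := hGadj hq1
          rw [h] at this
          exact this.symm
        · exact absurd h.symm hqnb
        · exact h.symm
      have hXcard : ((Dnc.filter (fun q' => q'.2 = y)).image Prod.fst).card
          = (Dnc.filter (fun q' => q'.2 = y)).card := by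
        apply Finset.card_image_of_injOn
        intro q1 h1 q2 h2 h
        simp only [Finset.coe_filter, Set.mem_setOf_eq] at h1 h2
        exact Prod.ext h (h1.2.trans h2.2.symm)
      have hsub : ((Dnc.filter (fun q' => q'.2 = y)).image Prod.fst)
          ∪ univ.filter (fun w => H.Adj b w) ⊆ G.neighborFinset q.2 := by
        intro w hw
        rcases Finset.mem_union.1 hw with hw | hw
        · rw [Finset.mem_image] at hw
          obtain ⟨q', hq', rfl⟩ := hw
          rw [mem_filter] at hq'
          have h1 := (hmemDnc hq'.1).1
          rw [SimpleGraph.mem_neighborFinset]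
          have h2 : q'.2 = q.2 := hq'.2.trans hq2.symm
          rw [h2] at h1
          exact (hGadj h1).symm
        · rw [mem_filter] at hw
          rw [SimpleGraph.mem_neighborFinset]
          exact hyadj w hw.2
      have hdisjX : Disjoint ((Dnc.filter (fun q' => q'.2 = y)).image Prod.fst)
          (univ.filter (fun w => H.Adj b w)) := by
        rw [Finset.disjoint_left]
        intro w hwX hwP
        rw [Finset.mem_image] at hwX
        obtain ⟨q', hq', rfl⟩ := hwX
        rw [mem_filter] at hq' hwP
        exact (hmemDnc hq'.1).2.2.2.2 (hGadj hwP.2)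
      have hfin : (Dnc.filter (fun q' => q'.2 = y)).card + dd b ≤ Δn := by
        calc (Dnc.filter (fun q' => q'.2 = y)).card + dd b
            = (((Dnc.filter (fun q' => q'.2 = y)).image Prod.fst)
              ∪ univ.filter (fun w => H.Adj b w)).card := by
              rw [Finset.card_union_of_disjoint hdisjX, hXcard]
          _ ≤ (G.neighborFinset q.2).card := Finset.card_le_card hsub
          _ ≤ Δn := hdegle q.2
      omega
  have N4 : Dnc.card ≤ Δn * (Δn - dd b) := by
    have hsub : Dnc ⊆ (G.neighborFinset a).biUnion
        (fun y => Dnc.filter (fun q => q.2 = y)) := by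
      intro q hq
      have hq' := hmemDnc hq
      rw [Finset.mem_biUnion]
      exact ⟨q.2, by simpa [SimpleGraph.mem_neighborFinset] using hq'.2.2.2.1,
        by rw [mem_filter]; exact ⟨hq, rfl⟩⟩
    calc Dnc.card ≤ ((G.neighborFinset a).biUnion (fun y => Dnc.filter (fun q => q.2 = y))).card :=
          Finset.card_le_card hsub
      _ ≤ ∑ y ∈ G.neighborFinset a, (Dnc.filter (fun q => q.2 = y)).card :=
          Finset.card_biUnion_le
      _ ≤ ∑ _y ∈ G.neighborFinset a, (Δn - dd b) :=
          Finset.sum_le_sum (fun y _ => hUy y)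
      _ = (G.neighborFinset a).card * (Δn - dd b) := by rw [Finset.sum_const, smul_eq_mul]
      _ ≤ Δn * (Δn - dd b) := Nat.mul_le_mul_right _ (hdegle a)
  -- Lemma B : m + p^2 ≤ 2Δp
  have F4a : ∀ y₁ ∈ P, S'.card + dd y₁ ≤ Δn + (S'.filter (fun v => H.Adj y₁ v)).card := by
    intro y₁ hy₁
    have hy₁adj : H.Adj a y₁ := hPmem.1 hy₁
    have hsub : S' ∪ univ.filter (fun w => H.Adj y₁ w) ⊆ G.neighborFinset y₁ := by
      intro w hw
      rcases Finset.mem_union.1 hw with hw | hw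
      · exact hS'NG y₁ hy₁adj hw
      · rw [mem_filter] at hw
        rw [SimpleGraph.mem_neighborFinset]
        exact hGadj hw.2
    have h1 : (S' ∪ univ.filter (fun w => H.Adj y₁ w)).card
        + (S' ∩ univ.filter (fun w => H.Adj y₁ w)).card
        = S'.card + (univ.filter (fun w => H.Adj y₁ w)).card :=
      Finset.card_union_add_card_inter _ _
    have h2 : S' ∩ univ.filter (fun w => H.Adj y₁ w) = S'.filter (fun v => H.Adj y₁ v) := by
      ext v
      simp only [Finset.mem_inter, mem_filter, mem_univ, true_and]
    have h3 : (S' ∪ univ.filter (fun w => H.Adj y₁ w)).card ≤ Δn :=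
      le_trans (Finset.card_le_card hsub) (hdegle y₁)
    have h1' : (S' ∪ univ.filter (fun w => H.Adj y₁ w)).card
        + (S'.filter (fun v => H.Adj y₁ v)).card = S'.card + dd y₁ := by
      rw [← h2]; exact h1
    omega
  have F4b : ∑ y₁ ∈ P, (S'.filter (fun v => H.Adj y₁ v)).card
      = ∑ x ∈ S', (P.filter (fun w => H.Adj w x)).card := by
    simp_rw [Finset.card_filter]
    exact Finset.sum_comm
  have F4c : ∀ x ∈ S',
      (P.filter (fun w => H.Adj w x)).card + (Dout.filter (fun q => q.1 = x)).card ≤ dd a := by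
    intro x hx
    have hOcard : ((Dout.filter (fun q => q.1 = x)).image Prod.snd).card
        = (Dout.filter (fun q => q.1 = x)).card := by
      apply Finset.card_image_of_injOn
      intro q1 h1 q2 h2 h
      simp only [Finset.coe_filter, Set.mem_setOf_eq] at h1 h2
      exact Prod.ext (h1.2.trans h2.2.symm) h
    have hsub : (P.filter (fun w => H.Adj w x)) ∪ ((Dout.filter (fun q => q.1 = x)).image Prod.snd)
        ⊆ univ.filter (fun w => H.Adj x w) := by
      intro w hw
      rcases Finset.mem_union.1 hw with hw | hw
      · rw [mem_filter] at hw
        rw [mem_filter]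
        exact ⟨mem_univ _, hw.2.symm⟩
      · rw [Finset.mem_image] at hw
        obtain ⟨q, hq, rfl⟩ := hw
        rw [mem_filter] at hq
        have h1 := (hmemDout hq.1).1
        rw [hq.2] at h1
        rw [mem_filter]
        exact ⟨mem_univ _, h1⟩
    have hdisjPO : Disjoint (P.filter (fun w => H.Adj w x))
        ((Dout.filter (fun q => q.1 = x)).image Prod.snd) := by
      rw [Finset.disjoint_left]
      intro w hwP hwO
      rw [Finset.mem_image] at hwO
      obtain ⟨q, hq, rfl⟩ := hwO
      rw [mem_filter] at hq hwP
      exact (hmemDout hq.1).2.2.2 (hGadj (hPmem.1 hwP.1))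
    calc (P.filter (fun w => H.Adj w x)).card + (Dout.filter (fun q => q.1 = x)).card
        = ((P.filter (fun w => H.Adj w x)) ∪ ((Dout.filter (fun q => q.1 = x)).image Prod.snd)).card := by
          rw [Finset.card_union_of_disjoint hdisjPO, hOcard]
      _ ≤ (univ.filter (fun w => H.Adj x w)).card := Finset.card_le_card hsub
      _ = dd x := rfl
      _ ≤ dd a := hamax' x
  have F4e : (∑ y₁ ∈ P, dd y₁) + Dout.card ≤ dd a * Δn := by
    have h1 : ∑ y₁ ∈ P, (S'.card + dd y₁)
        ≤ ∑ y₁ ∈ P, (Δn + (S'.filter (fun v => H.Adj y₁ v)).card) := Finset.sum_le_sum F4a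
    rw [Finset.sum_add_distrib, Finset.sum_add_distrib, Finset.sum_const, Finset.sum_const,
      smul_eq_mul, smul_eq_mul, F4b, hPcard] at h1
    have h2 : ∑ x ∈ S', ((P.filter (fun w => H.Adj w x)).card
        + (Dout.filter (fun q => q.1 = x)).card) ≤ ∑ _x ∈ S', dd a := Finset.sum_le_sum F4c
    rw [Finset.sum_add_distrib, ← hDoutsum, Finset.sum_const, smul_eq_mul] at h2
    -- h1 : dd a * S'.card + ∑ dd ≤ dd a * Δn + T ; h2 : T + Dout.card ≤ S'.card * dd a
    have h3 : S'.card * dd a = dd a * S'.card := Nat.mul_comm _ _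
    omega
  have hPsubNG : P ⊆ G.neighborFinset a := by
    intro w hw
    rw [SimpleGraph.mem_neighborFinset]
    exact hGadj (hPmem.1 hw)
  have N6 : Din.card ≤ (∑ y₁ ∈ P, dd y₁) + (Δn - dd a) * dd a := by
    have hsd : (G.neighborFinset a \ P).card ≤ Δn - dd a := by
      rw [Finset.card_sdiff_of_subset hPsubNG, hPcard]
      exact Nat.sub_le_sub_right (hdegle a) _
    calc Din.card ≤ ((G.neighborFinset a).biUnion (fun y => D.filter (fun q => q.2 = y))).card :=
          Finset.card_le_card hDinsub
      _ ≤ ∑ y ∈ G.neighborFinset a, (D.filter (fun q => q.2 = y)).card := Finset.card_biUnion_le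
      _ = (∑ y ∈ G.neighborFinset a \ P, (D.filter (fun q => q.2 = y)).card)
          + ∑ y ∈ P, (D.filter (fun q => q.2 = y)).card := (Finset.sum_sdiff hPsubNG).symm
      _ ≤ (∑ _y ∈ G.neighborFinset a \ P, dd a) + ∑ y ∈ P, dd y :=
          Nat.add_le_add (Finset.sum_le_sum (fun y _ => le_trans (hcnt y) (hamax' y)))
            (Finset.sum_le_sum (fun y _ => hcnt y))
      _ = (G.neighborFinset a \ P).card * dd a + ∑ y ∈ P, dd y := by
          rw [Finset.sum_const, smul_eq_mul]
      _ ≤ (Δn - dd a) * dd a + ∑ y ∈ P, dd y :=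
          Nat.add_le_add_right (Nat.mul_le_mul_right _ hsd) _
      _ = (∑ y₁ ∈ P, dd y₁) + (Δn - dd a) * dd a := by rw [Nat.add_comm]
  have hsum_cancel : (Δn - dd a) * dd a + dd a * dd a = Δn * dd a := by
    rw [← Nat.add_mul, Nat.sub_add_cancel hpΔ]
  have F4full : D.card + dd a * dd a ≤ dd a * Δn + Δn * dd a := by
    have h1 : D.card ≤ (∑ y₁ ∈ P, dd y₁) + (Δn - dd a) * dd a + Dout.card := by
      rw [← hsplit1]
      exact Nat.add_le_add_right N6 _
    omega
  -- move to the reals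
  have hΔ0 : (0 : ℝ) ≤ (Δn : ℝ) := Nat.cast_nonneg _
  have hsize' : (1 - ε) * (Δn : ℝ) ^ 2 ≤ (D.card : ℝ) := by
    rw [← hmcard]; exact hsize
  have c_split1 : (Din.card : ℝ) + (Dout.card : ℝ) = (D.card : ℝ) := by exact_mod_cast hsplit1
  have c_split2 : (Dc.card : ℝ) + (Dnc.card : ℝ) = (Din.card : ℝ) := by exact_mod_cast hsplit2
  have c_N1 : (Din.card : ℝ) ≤ (Δn : ℝ) * (dd b : ℝ) := by exact_mod_cast N1
  have c_N2 : (Dout.card : ℝ) + (S'.card : ℝ) * (dd a : ℝ) ≤ (S'.card : ℝ) * (Δn : ℝ) := by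
    exact_mod_cast N2
  have c_S' : (S'.card : ℝ) ≤ (Δn : ℝ) := by exact_mod_cast hS'card
  have c_p : (dd a : ℝ) ≤ (Δn : ℝ) := by exact_mod_cast hpΔ
  have c_r : (dd b : ℝ) ≤ (Δn : ℝ) := by exact_mod_cast hbr
  have c_N4 : (Dnc.card : ℝ) ≤ (Δn : ℝ) * ((Δn : ℝ) - (dd b : ℝ)) := by
    have h1 : (Dnc.card : ℝ) ≤ ((Δn * (Δn - dd b) : ℕ) : ℝ) := Nat.cast_le.2 N4
    rwa [Nat.cast_mul, Nat.cast_sub hbr] at h1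
  have c_F4 : (D.card : ℝ) + (dd a : ℝ) * (dd a : ℝ)
      ≤ (dd a : ℝ) * (Δn : ℝ) + (Δn : ℝ) * (dd a : ℝ) := by exact_mod_cast F4full
  have hsq : ((Δn : ℝ) - (dd a : ℝ)) ^ 2 ≤ ε * (Δn : ℝ) ^ 2 := by nlinarith [hsize', c_F4]
  have c4 : (Δn : ℝ) - (dd a : ℝ) ≤ Real.sqrt ε * (Δn : ℝ) := by
    have h0 : (0 : ℝ) ≤ (Δn : ℝ) - (dd a : ℝ) := by linarith
    calc (Δn : ℝ) - (dd a : ℝ) = Real.sqrt (((Δn : ℝ) - (dd a : ℝ)) ^ 2) :=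
          (Real.sqrt_sq h0).symm
      _ ≤ Real.sqrt (ε * (Δn : ℝ) ^ 2) := Real.sqrt_le_sqrt hsq
      _ = Real.sqrt ε * (Δn : ℝ) := by rw [Real.sqrt_mul hε0, Real.sqrt_sq hΔ0]
  have c_dout : (Dout.card : ℝ) ≤ (Δn : ℝ) * ((Δn : ℝ) - (dd a : ℝ)) := by
    have h1 : (S'.card : ℝ) * ((Δn : ℝ) - (dd a : ℝ)) ≤ (Δn : ℝ) * ((Δn : ℝ) - (dd a : ℝ)) :=
      mul_le_mul_of_nonneg_right c_S' (by linarith)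
    nlinarith [c_N2]
  have hΔΔp : (Δn : ℝ) * ((Δn : ℝ) - (dd a : ℝ)) ≤ Real.sqrt ε * (Δn : ℝ) ^ 2 := by
    have h1 := mul_le_mul_of_nonneg_left c4 hΔ0
    nlinarith [h1]
  have c_dc : (1 - 2 * ε - 2 * Real.sqrt ε) * (Δn : ℝ) ^ 2 ≤ (Dc.card : ℝ) := by
    nlinarith [c_split1, c_split2, c_N1, c_N4, c_dout, hΔΔp, hsize']
  -- construct the answer
  refine ⟨(G.neighborFinset b : Set V), ?_, (G.neighborFinset a : Set V), ?_, ?_, ?_, ?_⟩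
  · intro x hx
    rw [Finset.mem_coe, SimpleGraph.mem_neighborFinset] at hx
    exact hsideB hx hbB
  · intro y hy
    rw [Finset.mem_coe, SimpleGraph.mem_neighborFinset] at hy
    exact hsideA hy ha
  · rw [Set.ncard_coe_finset]; exact hdegle b
  · rw [Set.ncard_coe_finset]; exact hdegle a
  · have hcard_img : (Dc.image (fun q => s(q.1, q.2))).card = Dc.card := by
      apply Finset.card_image_of_injOn
      intro q1 h1 q2 h2 h
      rw [Finset.mem_coe] at h1 h2
      obtain ⟨_, hA1, hB1, _⟩ := hmemDin (Finset.mem_of_mem_filter _ h1)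
      obtain ⟨_, hA2, hB2, _⟩ := hmemDin (Finset.mem_of_mem_filter _ h2)
      rw [Sym2.eq_iff] at h
      rcases h with ⟨ha1, ha2⟩ | ⟨ha1, ha2⟩
      · exact Prod.ext ha1 ha2
      · exact absurd hB2 (hAB (ha1 ▸ hA1))
    have himg : ((Dc.image (fun q => s(q.1, q.2)) : Finset (Sym2 V)) : Set (Sym2 V))
        ⊆ {e | e ∈ H.edgeSet ∧ ∃ x ∈ (G.neighborFinset b : Set V),
            ∃ y ∈ (G.neighborFinset a : Set V), e = s(x, y)} := by
      intro e he
      rw [Finset.mem_coe, Finset.mem_image] at he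
      obtain ⟨q, hq, rfl⟩ := he
      have hqb : G.Adj b q.1 := by
        rw [hDcDef, mem_filter] at hq
        exact hq.2
      obtain ⟨hq1, hqA, hqB, hqa⟩ := hmemDin (Finset.mem_of_mem_filter _ hq)
      refine ⟨(SimpleGraph.Subgraph.mem_edgeSet).2 hq1, q.1, ?_, q.2, ?_, rfl⟩
      · rw [Finset.mem_coe, SimpleGraph.mem_neighborFinset]; exact hqb
      · rw [Finset.mem_coe, SimpleGraph.mem_neighborFinset]; exact hqa
    have hfinT : ({e | e ∈ H.edgeSet ∧ ∃ x ∈ (G.neighborFinset b : Set V),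
        ∃ y ∈ (G.neighborFinset a : Set V), e = s(x, y)} : Set (Sym2 V)).Finite :=
      Set.toFinite _
    have h1 := Set.ncard_le_ncard himg hfinT
    rw [Set.ncard_coe_finset, hcard_img] at h1
    have h2 : (Dc.card : ℝ) ≤ (({e | e ∈ H.edgeSet ∧ ∃ x ∈ (G.neighborFinset b : Set V),
        ∃ y ∈ (G.neighborFinset a : Set V), e = s(x, y)} : Set (Sym2 V)).ncard : ℝ) := by
      exact_mod_cast h1
    linarith [c_dc]

set_option maxHeartbeats 1000000 in
theorem stmt7 {V : Type*} [Fintype V] (G : SimpleGraph V) [DecidableRel G.Adj]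
    (A B : Set V) (hdisj : Disjoint A B) (hcover : A ∪ B = Set.univ)
    (hbip : ∀ x y, G.Adj x y → (x ∈ A ∧ y ∈ B) ∨ (x ∈ B ∧ y ∈ A))
    (ε : ℝ) (hε : 0 ≤ ε ∧ ε ≤ 1)
    (H : G.Subgraph)
    (hclique : ∀ e ∈ H.edgeSet, ∀ f ∈ H.edgeSet, EdgesClose G e f)
    (hsize : (1 - ε) * (G.maxDegree : ℝ) ^ 2 ≤ (H.edgeSet.ncard : ℝ)) :
    ∃ A' ⊆ A, ∃ B' ⊆ B, A'.ncard ≤ G.maxDegree ∧ B'.ncard ≤ G.maxDegree ∧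
      (1 - 2 * ε - 2 * Real.sqrt ε) * (G.maxDegree : ℝ) ^ 2 ≤
        (({e | e ∈ H.edgeSet ∧ ∃ x ∈ A', ∃ y ∈ B', e = s(x, y)} : Set (Sym2 V)).ncard : ℝ) := by
  classical
  by_cases hm0 : H.edgeSet.ncard = 0
  · refine ⟨∅, Set.empty_subset _, ∅, Set.empty_subset _, by simp, by simp, ?_⟩
    have hset : ({e | e ∈ H.edgeSet ∧ ∃ x ∈ (∅ : Set V), ∃ y ∈ (∅ : Set V), e = s(x, y)} :
        Set (Sym2 V)) = ∅ := by
      ext e; simp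
    rw [hset]
    have h1 : (1 - 2 * ε - 2 * Real.sqrt ε) ≤ (1 - ε) := by
      nlinarith [Real.sqrt_nonneg ε, hε.1]
    have h2 : (1 - ε) * (G.maxDegree : ℝ) ^ 2 ≤ 0 := by
      rw [hm0] at hsize; simpa using hsize
    have h3 : (1 - 2 * ε - 2 * Real.sqrt ε) * (G.maxDegree : ℝ) ^ 2
        ≤ (1 - ε) * (G.maxDegree : ℝ) ^ 2 :=
      mul_le_mul_of_nonneg_right h1 (sq_nonneg _)
    simpa using le_trans h3 h2
  · have hfin : H.edgeSet.Finite := Set.toFinite _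
    have hne : H.edgeSet.Nonempty := by
      rcases Set.eq_empty_or_nonempty H.edgeSet with h | h
      · exact absurd (by rw [h]; simp) hm0
      · exact h
    have hEadj : ∃ x y, H.Adj x y := by
      obtain ⟨e, he⟩ := hne
      revert he
      induction e using Sym2.ind with
      | _ x y => exact fun he => ⟨x, y, (SimpleGraph.Subgraph.mem_edgeSet).1 he⟩
    obtain ⟨x₀, y₀, hxy₀⟩ := hEadj
    obtain ⟨a, _, hamax⟩ := Finset.exists_max_image Finset.univ
      (fun v => {w | H.Adj v w}.ncard) ⟨x₀, Finset.mem_univ _⟩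
    have hamax' : ∀ v, {w | H.Adj v w}.ncard ≤ {w | H.Adj a w}.ncard :=
      fun v => hamax v (Finset.mem_univ v)
    have hane : {w | H.Adj a w}.Nonempty := by
      have h1 : 0 < {w | H.Adj x₀ w}.ncard :=
        (Set.ncard_pos (Set.toFinite _)).2 ⟨y₀, hxy₀⟩
      have h2 : 0 < {w | H.Adj a w}.ncard := lt_of_lt_of_le h1 (hamax' x₀)
      exact (Set.ncard_pos (Set.toFinite _)).1 h2
    have haAB : a ∈ A ∪ B := by rw [hcover]; trivial
    rcases haAB with haA | haB
    · exact key G A B hdisj hbip ε hε.1 H hclique hsize a haA hamax' hane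
    · obtain ⟨A'', hA''B, B'', hB''A, hc1, hc2, hineq⟩ :=
        key G B A hdisj.symm (fun x y h => (hbip x y h).symm) ε hε.1 H hclique hsize a haB
          hamax' hane
      refine ⟨B'', hB''A, A'', hA''B, hc2, hc1, ?_⟩
      have hswap : ({e | e ∈ H.edgeSet ∧ ∃ x ∈ B'', ∃ y ∈ A'', e = s(x, y)} : Set (Sym2 V))
          = ({e | e ∈ H.edgeSet ∧ ∃ x ∈ A'', ∃ y ∈ B'', e = s(x, y)} : Set (Sym2 V)) := by
        ext e
        constructor
        · rintro ⟨he, x, hx, y, hy, rfl⟩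
          exact ⟨he, y, hy, x, hx, Sym2.eq_swap⟩
        · rintro ⟨he, x, hx, y, hy, rfl⟩
          exact ⟨he, y, hy, x, hx, Sym2.eq_swap⟩
      rw [hswap]
      exact hineq
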